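/- For every integer k ≥ 1 and every integer s with 0 ≤ s < k, the numbers b_{s,ℓ} defined by the recursion b_{0,1} = 1 and b_{s,ℓ+1} = (1/(ℓ-s)!) · Σ_{j=0}^{min(s,ℓ-1)} (ℓ-j)! · b_{j,ℓ} satisfy the closed formula b_{s,ℓ} = (ℓ-1+s)! / (2^s · (ℓ-1-s)! · s!). -/

import Mathlib

private lemma fac_ne (n : ℕ) : (Nat.factorial n : ℚ) ≠ 0 := by
  exact_mod_cast Nat.factorial_ne_zero n

private lemma sumlem (m : ℕ) : ∀ s : ℕ, s ≤ m →
    ∑ j ∈ Finset.range (s + 1),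
      (Nat.factorial (m + 1 - j) : ℚ) * (Nat.factorial (m + j) : ℚ) /
        (2 ^ j * (Nat.factorial (m - j) : ℚ) * (Nat.factorial j : ℚ))
    = (Nat.factorial (m + 1 + s) : ℚ) / (2 ^ s * (Nat.factorial s : ℚ)) := by
  intro s
  induction s with
  | zero =>
    intro _
    simp [Nat.factorial]
    field_simp
  | succ s ih =>
    intro hs
    rw [Finset.sum_range_succ, ih (by omega)]
    obtain ⟨d, hd⟩ := Nat.exists_eq_add_of_le hs
    subst hd
    have e1 : s + 1 + d + 1 - (s + 1) = d + 1 := by omega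
    have e2 : s + 1 + d - (s + 1) = d := by omega
    have e3 : s + 1 + d + (s + 1) = 2 * s + 2 + d := by omega
    have e4 : s + 1 + d + 1 + s = 2 * s + 2 + d := by omega
    have e5 : s + 1 + d + 1 + (s + 1) = (2 * s + 2 + d) + 1 := by omega
    rw [e1, e2, e3, e4, e5, Nat.factorial_succ (2 * s + 2 + d),
      Nat.factorial_succ d, Nat.factorial_succ s, pow_succ]
    have h1 := fac_ne (2 * s + 2 + d)
    have h2 := fac_ne d
    have h3 := fac_ne s
    push_cast
    field_simp
    ring

theorem stmt_0 (b : ℕ → ℕ → ℚ)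
    (h1 : b 0 1 = 1)
    (hrec : ∀ ℓ s : ℕ, 1 ≤ ℓ → s ≤ ℓ →
      b s (ℓ + 1) = (1 / (Nat.factorial (ℓ - s) : ℚ)) *
        ∑ j ∈ Finset.range (min s (ℓ - 1) + 1),
          (Nat.factorial (ℓ - j) : ℚ) * b j ℓ) :
    ∀ k s : ℕ, 1 ≤ k → s < k →
      b s k = (Nat.factorial (k - 1 + s) : ℚ) /
        (2 ^ s * (Nat.factorial (k - 1 - s) : ℚ) * (Nat.factorial s : ℚ)) := by
  intro k
  induction k with
  | zero => intro s h _; omega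
  | succ ℓ ih =>
    intro s _ hs
    rcases Nat.eq_zero_or_pos ℓ with h0 | hℓ
    · subst h0
      interval_cases s
      simpa [Nat.factorial] using h1
    · have hsℓ : s ≤ ℓ := by omega
      rw [hrec ℓ s hℓ hsℓ]
      obtain ⟨m, rfl⟩ : ∃ m, ℓ = m + 1 := ⟨ℓ - 1, by omega⟩
      have hsum : ∑ j ∈ Finset.range (min s (m + 1 - 1) + 1),
          (Nat.factorial (m + 1 - j) : ℚ) * b j (m + 1)
          = ∑ j ∈ Finset.range (min s m + 1),
            (Nat.factorial (m + 1 - j) : ℚ) * (Nat.factorial (m + j) : ℚ) /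
              (2 ^ j * (Nat.factorial (m - j) : ℚ) * (Nat.factorial j : ℚ)) := by
        simp only [Nat.add_sub_cancel]
        refine Finset.sum_congr rfl fun j hj => ?_
        have hjm : j ≤ m := by
          have := Finset.mem_range.mp hj; omega
        rw [ih j (by omega) (by omega)]
        have : m + 1 - 1 = m := by omega
        rw [this]
        ring
      rw [hsum]
      rcases le_or_gt s m with hsm | hsm
      · rw [min_eq_left hsm, sumlem m s hsm]
        have e1 : m + 1 + 1 - 1 + s = m + 1 + s := by omega
        have e2 : m + 1 + 1 - 1 - s = m + 1 - s := by omega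
        rw [e1, e2]
        have h1 := fac_ne (m + 1 - s)
        have h2 := fac_ne s
        have h3 : (2 : ℚ) ^ s ≠ 0 := by positivity
        rw [one_div, eq_div_iff (by positivity)]
        field_simp
      · have hse : s = m + 1 := by omega
        subst hse
        rw [min_eq_right (by omega), sumlem m m le_rfl]
        have e1 : m + 1 + 1 - 1 + (m + 1) = (m + 1 + m) + 1 := by omega
        have e2 : m + 1 + 1 - 1 - (m + 1) = 0 := by omega
        have e3 : m + 1 - (m + 1) = 0 := by omega
        rw [e1, e2, e3, Nat.factorial_succ (m + 1 + m), Nat.factorial_succ m,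
          pow_succ]
        have h1 := fac_ne (m + 1 + m)
        have h2 := fac_ne m
        have h3 : (2 : ℚ) ^ m ≠ 0 := by positivity
        simp only [Nat.factorial_zero]
        push_cast
        field_simp
        ring
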